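/- Let G be a finite tree and suppose for each edge uv we assign nonnegative integers d(u→v) and d(v→u) with d(u→v)+d(v→u)=c (c a fixed positive integer), such that for every non-leaf vertex v, the total number of incoming edges ∑_u d(u→v) minus the minimum over neighbors u of d(u→v) is at most c−1, and leaves have all c edges incoming. Then the stars obtained by grouping at each vertex v its outgoing multi-edges into max_u d(v→u) stars centered at v yield a star packing covering each edge of G exactly c times and each vertex at most 2c−1 times. -/

import Mathlib

open scoped Classical

/-- A star subgraph of `G`: a center vertex with a nonempty set of neighbors. -/
structure GraphStar {V : Type*} (G : SimpleGraph V) where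
  center : V
  leaves : Finset V
  nonempty : leaves.Nonempty
  adj : ∀ u ∈ leaves, G.Adj center u

/-- The star contains the vertex `v`. -/
def GraphStar.memV {V : Type*} {G : SimpleGraph V} (S : GraphStar G) (v : V) : Prop :=
  v = S.center ∨ v ∈ S.leaves

/-- The star contains the edge `uv`. -/
def GraphStar.memE {V : Type*} {G : SimpleGraph V} (S : GraphStar G) (u v : V) : Prop :=
  (u = S.center ∧ v ∈ S.leaves) ∨ (v = S.center ∧ u ∈ S.leaves)

lemma sum_range_ite_lt (M k : ℕ) :
    ∑ t ∈ Finset.range M, (if t < k then 1 else 0) = min k M := by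
  induction M with
  | zero => simp
  | succ M ih => rw [Finset.sum_range_succ, ih]; split <;> omega

/-- The star at vertex `p.1` consisting of neighbors `u` with `d p.1 u > p.2`. -/
def starAt {V : Type*} [Fintype V] {G : SimpleGraph V} {d : V → V → ℕ}
    (hd0 : ∀ u v, ¬ G.Adj u v → d u v = 0)
    (p : Σ v : V, Fin (Finset.univ.sup (fun u => d v u))) : GraphStar G where
  center := p.1
  leaves := Finset.univ.filter (fun u => (p.2 : ℕ) < d p.1 u)
  nonempty := by
    obtain ⟨u, -, hu⟩ := Finset.lt_sup_iff.mp p.2.isLt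
    exact ⟨u, by simpa using hu⟩
  adj := fun u hu => by
    simp only [Finset.mem_filter] at hu
    by_contra h
    rw [hd0 _ _ h] at hu
    omega

@[simp] lemma starAt_center {V : Type*} [Fintype V] {G : SimpleGraph V} {d : V → V → ℕ}
    (hd0 : ∀ u v, ¬ G.Adj u v → d u v = 0)
    (p : Σ v : V, Fin (Finset.univ.sup (fun u => d v u))) :
    (starAt hd0 p).center = p.1 := rfl

@[simp] lemma starAt_mem_leaves {V : Type*} [Fintype V] {G : SimpleGraph V} {d : V → V → ℕ}
    (hd0 : ∀ u v, ¬ G.Adj u v → d u v = 0)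
    (p : Σ v : V, Fin (Finset.univ.sup (fun u => d v u))) (u : V) :
    u ∈ (starAt hd0 p).leaves ↔ (p.2 : ℕ) < d p.1 u := by
  simp [starAt]

/-- orienting each edge of a tree into `d(u→v)` plus `d(v→u) = c`
directed multi-edges so that each non-leaf vertex has (incoming total) − (min
incoming from a single neighbor) ≤ c − 1 and leaves have all `c` edges
incoming, the stars obtained by grouping the outgoing multi-edges at each
vertex (with `max_u d(v→u)` stars centered at `v`, the star multiplicities
towards a neighbor `u` summing to `d(v→u)`) form a star packing covering each
edge exactly `c` times and each vertex at most `2c − 1` times. -/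
theorem directed_orientation_star_packing {V : Type*} [Fintype V]
    (G : SimpleGraph V) (hG : G.IsTree) (c : ℕ) (hc : 0 < c)
    (d : V → V → ℕ)
    (hd : ∀ u v, G.Adj u v → d u v + d v u = c)
    (hd0 : ∀ u v, ¬ G.Adj u v → d u v = 0)
    (hleaf : ∀ v, (∃! u, G.Adj v u) → ∀ u, G.Adj u v → d u v = c)
    (hnonleaf : ∀ v, ¬ (∃! u, G.Adj v u) →
      ∀ u, G.Adj u v → (∑ x, d x v) - d u v ≤ c - 1) :
    ∃ (n : ℕ) (st : Fin n → GraphStar G) (m : Fin n → ℕ),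
      (∀ i, 0 < m i) ∧
      (∀ v u, G.Adj v u →
        ∑ i, (if (st i).center = v ∧ u ∈ (st i).leaves then m i else 0) = d v u) ∧
      (∀ v : V, ∑ i, (if (st i).center = v then m i else 0) =
        Finset.univ.sup (fun u => d v u)) ∧
      (∀ u v, G.Adj u v → ∑ i, (if (st i).memE u v then m i else 0) = c) ∧
      (∀ x : V, ∑ i, (if (st i).memV x then m i else 0) ≤ 2 * c - 1) := by
  classical
  let ι := Σ v : V, Fin (Finset.univ.sup (fun u => d v u))
  let e : Fin (Fintype.card ι) ≃ ι := (Fintype.equivFin ι).symm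
  have hsum : ∀ F : GraphStar G → ℕ,
      (∑ i, F (starAt hd0 (e i))) =
        ∑ v, ∑ t : Fin (Finset.univ.sup (fun u => d v u)), F (starAt hd0 ⟨v, t⟩) := by
    intro F
    rw [Equiv.sum_comp e (fun p => F (starAt hd0 p)), ← Finset.univ_sigma_univ,
      Finset.sum_sigma]
  have hcount : ∀ v u : V,
      (∑ t : Fin (Finset.univ.sup (fun u => d v u)),
        if (t : ℕ) < d v u then 1 else 0) = d v u := by
    intro v u
    rw [Fin.sum_univ_eq_sum_range (fun t => if t < d v u then (1:ℕ) else 0),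
      sum_range_ite_lt]
    exact min_eq_left (Finset.le_sup (f := fun u => d v u) (Finset.mem_univ u))
  have harc : ∀ v u : V,
      (∑ i, if (starAt hd0 (e i) : GraphStar G).center = v ∧
          u ∈ (starAt hd0 (e i)).leaves then 1 else 0) = d v u := by
    intro v u
    rw [hsum (fun S => if S.center = v ∧ u ∈ S.leaves then 1 else 0)]
    rw [Fintype.sum_eq_single v (fun w hw => Finset.sum_eq_zero (fun t _ => by
      simp [hw]))]
    simpa using hcount v u
  have hctr : ∀ v : V,
      (∑ i, if (starAt hd0 (e i) : GraphStar G).center = v then 1 else 0) =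
        Finset.univ.sup (fun u => d v u) := by
    intro v
    rw [hsum (fun S => if S.center = v then 1 else 0)]
    rw [Fintype.sum_eq_single v (fun w hw => Finset.sum_eq_zero (fun t _ => by
      simp [hw]))]
    simp
  have hlv : ∀ x : V,
      (∑ i, if x ∈ (starAt hd0 (e i) : GraphStar G).leaves then 1 else 0) =
        ∑ w, d w x := by
    intro x
    rw [hsum (fun S => if x ∈ S.leaves then 1 else 0)]
    exact Finset.sum_congr rfl (fun w _ => by simpa using hcount w x)
  have hbound : ∀ x : V,
      Finset.univ.sup (fun u => d x u) + ∑ w, d w x ≤ 2 * c - 1 := by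
    intro x
    by_cases hlf : ∃! u, G.Adj x u
    · obtain ⟨u, hu, huniq⟩ := hlf
      have hin : ∑ w, d w x = c := by
        rw [Fintype.sum_eq_single u (fun w hw => by
          by_cases h : G.Adj w x
          · exact absurd (huniq w h.symm) hw
          · exact hd0 w x h)]
        exact hleaf x ⟨u, hu, huniq⟩ u hu.symm
      have hsup : Finset.univ.sup (fun w => d x w) = 0 := by
        refine Nat.le_zero.mp (Finset.sup_le (fun w _ => ?_))
        by_cases h : G.Adj x w
        · have h1 := hd x w h
          have h2 := hleaf x ⟨u, hu, huniq⟩ w h.symm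
          omega
        · exact le_of_eq (hd0 x w h)
      omega
    · by_cases hnb : ∃ u, G.Adj x u
      · obtain ⟨u0, hu0⟩ := hnb
        obtain ⟨u, hu, hmin⟩ := Finset.exists_min_image
          (Finset.univ.filter (fun w => G.Adj x w)) (fun w => d w x)
          ⟨u0, by simp [hu0]⟩
        have hadj : G.Adj x u := (Finset.mem_filter.mp hu).2
        have h1 : Finset.univ.sup (fun w => d x w) ≤ c - d u x := by
          refine Finset.sup_le (fun w _ => ?_)
          by_cases h : G.Adj x w
          · have h2 := hd x w h
            have h3 := hmin w (by simp [h])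
            omega
          · simp [hd0 x w h]
        have h2 : d u x ≤ ∑ w, d w x :=
          Finset.single_le_sum (f := fun w => d w x)
            (fun _ _ => Nat.zero_le _) (Finset.mem_univ u)
        have h3 := hnonleaf x hlf u hadj.symm
        have h4 : d u x ≤ c := by have := hd x u hadj; omega
        omega
      · push_neg at hnb
        have hsup : Finset.univ.sup (fun w => d x w) = 0 :=
          Nat.le_zero.mp (Finset.sup_le (fun w _ => le_of_eq (hd0 x w (hnb w))))
        have hS : ∑ w, d w x = 0 :=
          Finset.sum_eq_zero (fun w _ => hd0 w x (fun h => hnb w h.symm))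
        omega
  refine ⟨Fintype.card ι, fun i => starAt hd0 (e i), fun _ => 1,
    fun _ => one_pos, fun v u _ => harc v u, hctr, ?_, ?_⟩
  · intro u v huv
    have hsplit : ∀ S : GraphStar G,
        (if S.memE u v then (1:ℕ) else 0) =
          (if S.center = u ∧ v ∈ S.leaves then 1 else 0) +
          (if S.center = v ∧ u ∈ S.leaves then 1 else 0) := by
      intro S
      rw [GraphStar.memE]
      by_cases h1 : S.center = u ∧ v ∈ S.leaves <;>
        by_cases h2 : S.center = v ∧ u ∈ S.leaves
      · exact absurd (h1.1.symm.trans h2.1) huv.ne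
      · rw [if_pos (Or.inl ⟨h1.1.symm, h1.2⟩), if_pos h1, if_neg h2]
      · rw [if_pos (Or.inr ⟨h2.1.symm, h2.2⟩), if_neg h1, if_pos h2]
      · rw [if_neg (fun h => ?_), if_neg h1, if_neg h2]
        rcases h with ⟨h, h'⟩ | ⟨h, h'⟩
        · exact h1 ⟨h.symm, h'⟩
        · exact h2 ⟨h.symm, h'⟩
    calc (∑ i, if (starAt hd0 (e i) : GraphStar G).memE u v then 1 else 0)
        = ∑ i, ((if (starAt hd0 (e i) : GraphStar G).center = u ∧
              v ∈ (starAt hd0 (e i)).leaves then 1 else 0) +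
            (if (starAt hd0 (e i) : GraphStar G).center = v ∧
              u ∈ (starAt hd0 (e i)).leaves then 1 else 0)) :=
          Finset.sum_congr rfl (fun i _ => hsplit _)
      _ = d u v + d v u := by rw [Finset.sum_add_distrib, harc u v, harc v u]
      _ = c := hd u v huv
  · intro x
    have hsplit : ∀ S : GraphStar G,
        (if S.memV x then (1:ℕ) else 0) ≤
          (if S.center = x then 1 else 0) + (if x ∈ S.leaves then 1 else 0) := by
      intro S
      by_cases h : S.memV x
      · rw [if_pos h]
        rcases h with h | h
        · rw [if_pos h.symm]
          exact Nat.le_add_right 1 _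
        · rw [if_pos h]
          exact Nat.le_add_left 1 _
      · rw [if_neg h]
        exact Nat.zero_le _
    calc (∑ i, if (starAt hd0 (e i) : GraphStar G).memV x then 1 else 0)
        ≤ ∑ i, ((if (starAt hd0 (e i) : GraphStar G).center = x then 1 else 0) +
            (if x ∈ (starAt hd0 (e i) : GraphStar G).leaves then 1 else 0)) :=
          Finset.sum_le_sum (fun i _ => hsplit _)
      _ = Finset.univ.sup (fun u => d x u) + ∑ w, d w x := by
          rw [Finset.sum_add_distrib, hctr x, hlv x]
      _ ≤ 2 * c - 1 := hbound x
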